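/- The rebasing rule is height-preserving admissible in the nested sequent calculus for GL: if Γ{Δ{·}, [Δ']} has a cut-free derivation of height h and depth(Δ{-}) > 0, then Γ{Δ{Δ'}} has a cut-free derivation of height at most h. -/

import Mathlib

/-- Formulas of GL in negation normal form. -/
inductive Formula : Type where
  | pos : ℕ → Formula
  | neg : ℕ → Formula
  | and : Formula → Formula → Formula
  | or  : Formula → Formula → Formula
  | box : Formula → Formula
  | dia : Formula → Formula
deriving DecidableEq

/-- Negation `A⊥` of a formula, via De Morgan duality. -/
def Formula.negate : Formula → Formula
  | .pos a => .neg a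
  | .neg a => .pos a
  | .and A B => .or A.negate B.negate
  | .or A B => .and A.negate B.negate
  | .box A => .dia A.negate
  | .dia A => .box A.negate

/-- An element of a nested sequent: a formula or a nested (bracketed) sequent. -/
inductive SeqElem : Type where
  | fml : Formula → SeqElem
  | nest : List SeqElem → SeqElem

/-- A nested sequent. -/
abbrev Sequent := List SeqElem

/-- Unary contexts: a nested sequent with a single hole. -/
inductive Ctx : Type where
  | hole : Sequent → Ctx
  | nest : Sequent → Ctx → Ctx

/-- Fill the hole of a context with a sequent. -/
def Ctx.fill : Ctx → Sequent → Sequent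
  | .hole Δ, Γ => Δ ++ Γ
  | .nest Δ c, Γ => .nest (c.fill Γ) :: Δ

/-- Depth of a context: number of brackets surrounding the hole. -/
def Ctx.depth : Ctx → ℕ
  | .hole _ => 0
  | .nest _ c => c.depth + 1

/-- Equivalence of nested sequents up to (deep) exchange. -/
inductive SeqEquiv : Sequent → Sequent → Prop where
  | nil : SeqEquiv [] []
  | cons {e : SeqElem} {Γ Δ : Sequent} : SeqEquiv Γ Δ → SeqEquiv (e :: Γ) (e :: Δ)
  | consNest {Γ' Δ' Γ Δ : Sequent} :
      SeqEquiv Γ' Δ' → SeqEquiv Γ Δ → SeqEquiv (.nest Γ' :: Γ) (.nest Δ' :: Δ)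
  | swap (a b : SeqElem) (Γ : Sequent) : SeqEquiv (a :: b :: Γ) (b :: a :: Γ)
  | trans {Γ Δ Θ : Sequent} : SeqEquiv Γ Δ → SeqEquiv Δ Θ → SeqEquiv Γ Θ

/-- `DerivH n Γ`: `Γ` has a cut-free derivation of height at most `n`. -/
inductive DerivH : ℕ → Sequent → Prop where
  | id (n : ℕ) (c : Ctx) (a : ℕ) :
      DerivH n (c.fill [.fml (.pos a), .fml (.neg a)])
  | and {n : ℕ} {c : Ctx} {A B : Formula} :
      DerivH n (c.fill [.fml A]) → DerivH n (c.fill [.fml B]) →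
      DerivH (n + 1) (c.fill [.fml (.and A B)])
  | or {n : ℕ} {c : Ctx} {A B : Formula} :
      DerivH n (c.fill [.fml A, .fml B]) →
      DerivH (n + 1) (c.fill [.fml (.or A B)])
  | box {n : ℕ} {c : Ctx} {A : Formula} :
      DerivH n (c.fill [.nest [.fml (.dia A.negate), .fml A]]) →
      DerivH (n + 1) (c.fill [.fml (.box A)])
  | dia {n : ℕ} (c d : Ctx) {A : Formula} :
      0 < d.depth →
      DerivH n (c.fill (d.fill [.fml A] ++ [.fml (.dia A)])) →
      DerivH (n + 1) (c.fill (d.fill [] ++ [.fml (.dia A)]))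
  | exch {n : ℕ} {Γ Δ : Sequent} : SeqEquiv Γ Δ → DerivH n Γ → DerivH n Δ
  | up {n : ℕ} {Γ : Sequent} : DerivH n Γ → DerivH (n + 1) Γ

/-- Derivability where cut is permitted on formulas satisfying `P`. -/
inductive DerivWith (P : Formula → Prop) : Sequent → Prop where
  | id (c : Ctx) (a : ℕ) :
      DerivWith P (c.fill [.fml (.pos a), .fml (.neg a)])
  | and {c : Ctx} {A B : Formula} :
      DerivWith P (c.fill [.fml A]) → DerivWith P (c.fill [.fml B]) →
      DerivWith P (c.fill [.fml (.and A B)])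
  | or {c : Ctx} {A B : Formula} :
      DerivWith P (c.fill [.fml A, .fml B]) →
      DerivWith P (c.fill [.fml (.or A B)])
  | box {c : Ctx} {A : Formula} :
      DerivWith P (c.fill [.nest [.fml (.dia A.negate), .fml A]]) →
      DerivWith P (c.fill [.fml (.box A)])
  | dia (c d : Ctx) {A : Formula} :
      0 < d.depth →
      DerivWith P (c.fill (d.fill [.fml A] ++ [.fml (.dia A)])) →
      DerivWith P (c.fill (d.fill [] ++ [.fml (.dia A)]))
  | cut {c : Ctx} {A : Formula} : P A →
      DerivWith P (c.fill [.fml A]) → DerivWith P (c.fill [.fml A.negate]) →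
      DerivWith P (c.fill [])
  | exch {Γ Δ : Sequent} : SeqEquiv Γ Δ → DerivWith P Γ → DerivWith P Δ

/-- Cut-free derivability. -/
abbrev Deriv : Sequent → Prop := DerivWith (fun _ => False)


def fmlOnly (F : Sequent) : Prop := ∀ e ∈ F, ∃ A, e = SeqElem.fml A

theorem seqEquiv_refl : ∀ Γ : Sequent, SeqEquiv Γ Γ
  | [] => .nil
  | _ :: Γ => .cons (seqEquiv_refl Γ)

theorem seqEquiv_symm {Γ Δ} (h : SeqEquiv Γ Δ) : SeqEquiv Δ Γ := by
  induction h with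
  | nil => exact .nil
  | cons _ ih => exact .cons ih
  | consNest _ _ ih1 ih2 => exact .consNest ih1 ih2
  | swap a b Γ => exact .swap b a Γ
  | trans _ _ ih1 ih2 => exact ih2.trans ih1

inductive EE : SeqElem → SeqElem → Prop
  | fml (A) : EE (.fml A) (.fml A)
  | nest {S T} : SeqEquiv S T → EE (.nest S) (.nest T)

theorem EE.refl : ∀ e, EE e e
  | .fml A => .fml A
  | .nest S => .nest (seqEquiv_refl S)

theorem EE.symm' {e f} : EE e f → EE f e
  | .fml A => .fml A
  | .nest h => .nest (seqEquiv_symm h)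

theorem EE.trans' {e f g} : EE e f → EE f g → EE e g
  | .fml A, h => h
  | .nest h, .nest h' => .nest (h.trans h')

theorem seqEquiv_consE {e f Γ Δ} (he : EE e f) (h : SeqEquiv Γ Δ) : SeqEquiv (e::Γ) (f::Δ) := by
  cases he with
  | fml A => exact .cons h
  | nest hn => exact .consNest hn h

theorem seqEquiv_of_perm {Γ Δ : Sequent} (h : Γ.Perm Δ) : SeqEquiv Γ Δ := by
  induction h with
  | nil => exact .nil
  | cons e _ ih => exact .cons ih
  | swap a b l => exact .swap b a l
  | trans _ _ ih1 ih2 => exact ih1.trans ih2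

theorem seqEquiv_append_right {Γ Δ} (h : SeqEquiv Γ Δ) (L : Sequent) :
    SeqEquiv (Γ ++ L) (Δ ++ L) := by
  induction h with
  | nil => exact seqEquiv_refl L
  | cons _ ih => exact .cons ih
  | consNest h1 _ _ ih2 => exact .consNest h1 ih2
  | swap a b Γ => exact .swap a b (Γ ++ L)
  | trans _ _ ih1 ih2 => exact ih1.trans ih2

theorem seqEquiv_append_left (L : Sequent) {Γ Δ} (h : SeqEquiv Γ Δ) :
    SeqEquiv (L ++ Γ) (L ++ Δ) := by
  induction L with
  | nil => exact h
  | cons e L ih => exact .cons ih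

theorem seqEquiv_append {Γ Δ Γ' Δ'} (h : SeqEquiv Γ Δ) (h' : SeqEquiv Γ' Δ') :
    SeqEquiv (Γ ++ Γ') (Δ ++ Δ') :=
  (seqEquiv_append_right h Γ').trans (seqEquiv_append_left Δ h')

theorem forall₂EE_refl : ∀ L : Sequent, List.Forall₂ EE L L
  | [] => .nil
  | e :: L => .cons (EE.refl e) (forall₂EE_refl L)

theorem forall₂EE_trans : ∀ {Γ Δ Θ : Sequent}, List.Forall₂ EE Γ Δ → List.Forall₂ EE Δ Θ →
    List.Forall₂ EE Γ Θ
  | _, _, _, .nil, .nil => .nil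
  | _, _, _, .cons h hs, .cons h' hs' => .cons (h.trans' h') (forall₂EE_trans hs hs')

/-- commuting a permutation past Forall₂. -/
theorem perm_forall₂EE {Δ₀ Δ Θ₀ : Sequent} (hp : Δ₀.Perm Δ) (hf : List.Forall₂ EE Δ Θ₀) :
    ∃ Θ₀', List.Forall₂ EE Δ₀ Θ₀' ∧ Θ₀'.Perm Θ₀ := by
  induction hp generalizing Θ₀ with
  | nil => exact ⟨Θ₀, by cases hf; exact .nil, by cases hf; exact .nil⟩
  | cons a _ ih =>
    cases hf with
    | cons h hs =>
      obtain ⟨m, hm, hpm⟩ := ih hs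
      exact ⟨_ :: m, .cons h hm, hpm.cons _⟩
  | swap a b l =>
    cases hf with
    | cons h hs =>
      cases hs with
      | cons h' hs' =>
        exact ⟨_ :: _ :: _, .cons h' (.cons h hs'), List.Perm.swap _ _ _⟩
  | trans _ _ ih1 ih2 =>
    obtain ⟨m, hm, hpm⟩ := ih2 hf
    obtain ⟨m', hm', hpm'⟩ := ih1 hm
    exact ⟨m', hm', hpm'.trans hpm⟩

theorem seqEquiv_to_rep {Γ Δ : Sequent} (h : SeqEquiv Γ Δ) :
    ∃ Δ₀, List.Forall₂ EE Γ Δ₀ ∧ Δ₀.Perm Δ := by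
  induction h with
  | nil => exact ⟨[], .nil, .nil⟩
  | @cons e Γ Δ _ ih =>
    obtain ⟨Δ₀, hf, hp⟩ := ih
    exact ⟨e :: Δ₀, .cons (EE.refl e) hf, hp.cons e⟩
  | @consNest Γ' Δ' Γ Δ h1 _ _ ih2 =>
    obtain ⟨Δ₀, hf, hp⟩ := ih2
    exact ⟨.nest Δ' :: Δ₀, .cons (.nest h1) hf, hp.cons _⟩
  | swap a b Γ =>
    exact ⟨a :: b :: Γ, forall₂EE_refl _, List.Perm.swap b a Γ⟩
  | trans _ _ ih1 ih2 =>
    obtain ⟨Δ₀, hf1, hp1⟩ := ih1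
    obtain ⟨Θ₀, hf2, hp2⟩ := ih2
    obtain ⟨Θ₀', hf', hp'⟩ := perm_forall₂EE hp1 hf2
    exact ⟨Θ₀', forall₂EE_trans hf1 hf', hp'.trans hp2⟩

theorem seqEquiv_of_forall₂ : ∀ {Γ Δ : Sequent}, List.Forall₂ EE Γ Δ → SeqEquiv Γ Δ
  | _, _, .nil => .nil
  | _, _, .cons h hs => seqEquiv_consE h (seqEquiv_of_forall₂ hs)

theorem seqEquiv_of_rep {Γ Δ Δ₀ : Sequent} (hf : List.Forall₂ EE Γ Δ₀) (hp : Δ₀.Perm Δ) :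
    SeqEquiv Γ Δ :=
  (seqEquiv_of_forall₂ hf).trans (seqEquiv_of_perm hp)

theorem forall₂EE_append_cons : ∀ {Γ₁ : Sequent} {e Γ₂ Δ₀},
    List.Forall₂ EE (Γ₁ ++ e :: Γ₂) Δ₀ →
    ∃ D₁ e' D₂, Δ₀ = D₁ ++ e' :: D₂ ∧ List.Forall₂ EE Γ₁ D₁ ∧ EE e e' ∧ List.Forall₂ EE Γ₂ D₂ := by
  intro Γ₁
  induction Γ₁ with
  | nil =>
    intro e Γ₂ Δ₀ h
    cases h with
    | cons h hs => exact ⟨[], _, _, rfl, .nil, h, hs⟩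
  | cons a Γ₁ ih =>
    intro e Γ₂ Δ₀ h
    cases h with
    | cons h hs =>
      obtain ⟨D₁, e', D₂, rfl, h1, h2, h3⟩ := ih hs
      exact ⟨_ :: D₁, e', D₂, rfl, .cons h h1, h2, h3⟩

theorem forall₂EE_append : ∀ {Γ₁ Δ₁ Γ₂ Δ₂ : Sequent}, List.Forall₂ EE Γ₁ Δ₁ →
    List.Forall₂ EE Γ₂ Δ₂ → List.Forall₂ EE (Γ₁ ++ Γ₂) (Δ₁ ++ Δ₂)
  | _, _, _, _, .nil, h => h
  | _, _, _, _, .cons h hs, h' => .cons h (forall₂EE_append hs h')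

/-- extraction of one element through an equivalence. -/
theorem seqEquiv_extract {Γ₁ : Sequent} {e Γ₂ Δ} (h : SeqEquiv (Γ₁ ++ e :: Γ₂) Δ) :
    ∃ Δ₁ e' Δ₂, Δ = Δ₁ ++ e' :: Δ₂ ∧ EE e e' ∧ SeqEquiv (Γ₁ ++ Γ₂) (Δ₁ ++ Δ₂) := by
  obtain ⟨Δ₀, hf, hp⟩ := seqEquiv_to_rep h
  obtain ⟨D₁, e', D₂, rfl, h1, h2, h3⟩ := forall₂EE_append_cons hf
  have he' : e' ∈ Δ := hp.mem_iff.mp (by simp)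
  obtain ⟨Δ₁, Δ₂, rfl⟩ := List.append_of_mem he'
  refine ⟨Δ₁, e', Δ₂, rfl, h2, ?_⟩
  have hp' : (D₁ ++ D₂).Perm (Δ₁ ++ Δ₂) := by
    have t1 : (e' :: (D₁ ++ D₂)).Perm (e' :: (Δ₁ ++ Δ₂)) :=
      (List.perm_middle.symm.trans hp).trans List.perm_middle
    exact t1.cons_inv
  exact seqEquiv_of_rep (forall₂EE_append h1 h3) hp'

theorem seqEquiv_ins {e f} {Γ₁ Γ₂ Δ₁ Δ₂ : Sequent} (he : EE e f)
    (h : SeqEquiv (Γ₁ ++ Γ₂) (Δ₁ ++ Δ₂)) : SeqEquiv (Γ₁ ++ e :: Γ₂) (Δ₁ ++ f :: Δ₂) := by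
  have t1 : SeqEquiv (Γ₁ ++ e :: Γ₂) (e :: (Γ₁ ++ Γ₂)) := seqEquiv_of_perm List.perm_middle
  have t2 : SeqEquiv (f :: (Δ₁ ++ Δ₂)) (Δ₁ ++ f :: Δ₂) := seqEquiv_of_perm List.perm_middle.symm
  exact (t1.trans (seqEquiv_consE he h)).trans t2

/-- split a list equation at a marked element. -/
theorem listsplit : ∀ {X : Sequent} {Y B₁ : Sequent} {b : SeqElem} {B₂ : Sequent},
    X ++ Y = B₁ ++ b :: B₂ →
    (∃ K, X = B₁ ++ b :: K ∧ B₂ = K ++ Y) ∨ (∃ K, Y = K ++ b :: B₂ ∧ B₁ = X ++ K) := by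
  intro X
  induction X with
  | nil =>
    intro Y B₁ b B₂ h
    exact .inr ⟨B₁, by simpa using h, by simp⟩
  | cons a X ih =>
    intro Y B₁ b B₂ h
    cases B₁ with
    | nil =>
      simp only [List.nil_append, List.cons_append] at h
      obtain ⟨rfl, h2⟩ := List.cons.inj h
      exact .inl ⟨X, by simp [h2], h2.symm⟩
    | cons c B₁ =>
      simp only [List.cons_append] at h
      obtain ⟨rfl, h2⟩ := List.cons.inj h
      rcases ih h2 with ⟨K, h1, h3⟩ | ⟨K, h1, h3⟩
      · exact .inl ⟨K, by simp [h1], h3⟩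
      · exact .inr ⟨K, h1, by simp [h3]⟩

theorem seqEquiv_extract2 {e₁ e₂ : SeqElem} {Γ Δ : Sequent}
    (h : SeqEquiv (e₁ :: e₂ :: Γ) Δ) :
    ∃ Δ₁ f₁ Δ₂ f₂ Δ₃, Δ = Δ₁ ++ f₁ :: Δ₂ ++ f₂ :: Δ₃ ∧
      ((EE e₁ f₁ ∧ EE e₂ f₂) ∨ (EE e₂ f₁ ∧ EE e₁ f₂)) ∧
      SeqEquiv Γ (Δ₁ ++ Δ₂ ++ Δ₃) := by
  obtain ⟨A₁, f, A₂, rfl, hef, h2⟩ := seqEquiv_extract (Γ₁ := []) h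
  obtain ⟨B₁, f₂, B₂, hB, hef2, h3⟩ := seqEquiv_extract (Γ₁ := []) h2
  rcases listsplit hB with ⟨K, hA₁, hB₂⟩ | ⟨K, hA₂, hB₁⟩
  · refine ⟨B₁, f₂, K, f, A₂, by simp [hA₁], .inr ⟨hef2, hef⟩, ?_⟩
    have : SeqEquiv Γ (B₁ ++ B₂) := h3
    rw [hB₂] at this
    simpa using this
  · refine ⟨A₁, f, K, f₂, B₂, by simp [hA₂], .inl ⟨hef, hef2⟩, ?_⟩
    have : SeqEquiv Γ (B₁ ++ B₂) := h3
    rw [hB₁] at this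
    simpa using this

inductive PCtx : Type where
  | phole : Sequent → PCtx
  | pnest : Sequent → PCtx → Sequent → PCtx

def PCtx.fill : PCtx → Sequent → Sequent
  | .phole Δ, Y => Δ ++ Y
  | .pnest Δ₁ q Δ₂, Y => Δ₁ ++ .nest (q.fill Y) :: Δ₂

def PCtx.depth : PCtx → ℕ
  | .phole _ => 0
  | .pnest _ q _ => q.depth + 1

def PCtx.prefixed : PCtx → Sequent → PCtx
  | .phole Δ', Δ => .phole (Δ ++ Δ')
  | .pnest Δ₁ q Δ₂, Δ => .pnest (Δ ++ Δ₁) q Δ₂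

def PCtx.comp : PCtx → PCtx → PCtx
  | .phole Δ, q => q.prefixed Δ
  | .pnest Δ₁ r Δ₂, q => .pnest Δ₁ (r.comp q) Δ₂

@[simp] theorem PCtx.prefixed_fill (p : PCtx) (Δ Y : Sequent) :
    (p.prefixed Δ).fill Y = Δ ++ p.fill Y := by
  cases p <;> simp [PCtx.prefixed, PCtx.fill]

@[simp] theorem PCtx.comp_fill (p q : PCtx) (Y : Sequent) :
    (p.comp q).fill Y = p.fill (q.fill Y) := by
  induction p with
  | phole Δ => simp [PCtx.comp, PCtx.fill]
  | pnest Δ₁ r Δ₂ ih => simp [PCtx.comp, PCtx.fill, ih]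

@[simp] theorem PCtx.prefixed_depth (p : PCtx) (Δ : Sequent) :
    (p.prefixed Δ).depth = p.depth := by
  cases p <;> simp [PCtx.prefixed, PCtx.depth]

@[simp] theorem PCtx.comp_depth (p q : PCtx) :
    (p.comp q).depth = p.depth + q.depth := by
  induction p with
  | phole Δ => simp [PCtx.comp, PCtx.depth]
  | pnest Δ₁ r Δ₂ ih => simp [PCtx.comp, PCtx.depth, ih]; omega

def Ctx.toP : Ctx → PCtx
  | .hole Δ => .phole Δ
  | .nest Δ c => .pnest [] c.toP Δ

@[simp] theorem Ctx.toP_fill (c : Ctx) (Y : Sequent) : (c.toP).fill Y = c.fill Y := by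
  induction c with
  | hole Δ => rfl
  | nest Δ c ih => simp [Ctx.toP, PCtx.fill, Ctx.fill, ih]

@[simp] theorem Ctx.toP_depth (c : Ctx) : (c.toP).depth = c.depth := by
  induction c with
  | hole Δ => rfl
  | nest Δ c ih => simp [Ctx.toP, PCtx.depth, Ctx.depth, ih]

def PCtx.toCtx : PCtx → Ctx
  | .phole Δ => .hole Δ
  | .pnest Δ₁ q Δ₂ => .nest (Δ₁ ++ Δ₂) q.toCtx

@[simp] theorem PCtx.toCtx_depth (p : PCtx) : p.toCtx.depth = p.depth := by
  induction p with
  | phole Δ => rfl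
  | pnest Δ₁ q Δ₂ ih => simp [PCtx.toCtx, Ctx.depth, PCtx.depth, ih]

theorem PCtx.fillcong (p : PCtx) {Z Z'} (h : SeqEquiv Z Z') :
    SeqEquiv (p.fill Z) (p.fill Z') := by
  induction p with
  | phole Δ => exact seqEquiv_append_left Δ h
  | pnest Δ₁ q Δ₂ ih =>
    exact seqEquiv_append_left Δ₁ (SeqEquiv.consNest ih (seqEquiv_refl Δ₂))

theorem PCtx.toCtx_equiv (p : PCtx) (Z : Sequent) : SeqEquiv (p.fill Z) (p.toCtx.fill Z) := by
  induction p with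
  | phole Δ => exact seqEquiv_refl _
  | pnest Δ₁ q Δ₂ ih =>
    have t1 : SeqEquiv (Δ₁ ++ SeqElem.nest (q.fill Z) :: Δ₂)
        (SeqElem.nest (q.fill Z) :: (Δ₁ ++ Δ₂)) := seqEquiv_of_perm List.perm_middle
    exact t1.trans (.consNest ih (seqEquiv_refl _))

/-- the hole of an equivalent copy of a filled context can be relocated exactly. -/
theorem fillinv : ∀ (g : PCtx) {T : Sequent}, SeqEquiv (g.fill []) T →
    ∃ g' : PCtx, T = g'.fill [] ∧ ∀ Z, SeqEquiv (g.fill Z) (g'.fill Z) := by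
  intro g
  induction g with
  | phole Δ =>
    intro T h
    refine ⟨.phole T, by simp [PCtx.fill], fun Z => ?_⟩
    have : SeqEquiv Δ T := by simpa [PCtx.fill] using h
    exact seqEquiv_append_right this Z
  | pnest Δ₁ q Δ₂ ih =>
    intro T h
    obtain ⟨T₁, e', T₂, rfl, hee, hrest⟩ := seqEquiv_extract (Γ₁ := Δ₁) (e := .nest (q.fill []))
      (by simpa [PCtx.fill] using h)
    cases hee with
    | @nest _ S hqS =>
      obtain ⟨g₀', rfl, hg₀'⟩ := ih hqS
      refine ⟨.pnest T₁ g₀' T₂, by simp [PCtx.fill], fun Z => ?_⟩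
      simp only [PCtx.fill]
      exact seqEquiv_ins (.nest (hg₀' Z)) hrest

/-- One rebasing step, modulo deep exchange. -/
inductive Reb : Sequent → Sequent → Prop where
  | graft (g : PCtx) (U R : Sequent) :
      Reb (.nest (g.fill []) :: .nest U :: R) (.nest (g.fill U) :: R)
  | inside {S S' : Sequent} (R : Sequent) :
      Reb S S' → Reb (.nest S :: R) (.nest S' :: R)
  | equiv {Γ₀ Γ Γ' Γ'₀ : Sequent} :
      SeqEquiv Γ₀ Γ → Reb Γ Γ' → SeqEquiv Γ' Γ'₀ → Reb Γ₀ Γ'₀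

theorem reb_build (g : PCtx) (U R : Sequent) {L L' : Sequent}
    (h1 : SeqEquiv L (.nest (g.fill []) :: .nest U :: R))
    (h2 : SeqEquiv (.nest (g.fill U) :: R) L') : Reb L L' :=
  .equiv h1 (.graft g U R) h2

theorem reb_inside_at {T S' : Sequent} (R : Sequent) {L L' : Sequent}
    (h1 : SeqEquiv L (.nest T :: R)) (hr : Reb T S')
    (h2 : SeqEquiv (.nest S' :: R) L') : Reb L L' :=
  .equiv h1 (.inside R hr) h2

/-- perm helpers -/
theorem perm1 (X₁ : Sequent) (a : SeqElem) (X₂ : Sequent) :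
    (X₁ ++ a :: X₂).Perm (a :: (X₁ ++ X₂)) := List.perm_middle

theorem perm2 (X₁ : Sequent) (a : SeqElem) (X₂ : Sequent) (b : SeqElem) (X₃ : Sequent) :
    (X₁ ++ a :: X₂ ++ b :: X₃).Perm (a :: b :: (X₁ ++ X₂ ++ X₃)) := by
  have t1 : (X₁ ++ a :: (X₂ ++ b :: X₃)).Perm (a :: (X₁ ++ (X₂ ++ b :: X₃))) := List.perm_middle
  have t2 : (X₁ ++ (X₂ ++ b :: X₃)).Perm (b :: (X₁ ++ X₂ ++ X₃)) := by
    have := List.perm_middle (a := b) (l₁ := X₁ ++ X₂) (l₂ := X₃)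
    simpa [List.append_assoc] using this
  have : X₁ ++ a :: X₂ ++ b :: X₃ = X₁ ++ a :: (X₂ ++ b :: X₃) := by simp
  rw [this]
  exact t1.trans (t2.cons a)

/-- the instance of rebasing we ultimately need. -/
theorem reb_inst : ∀ (c : Ctx) {d : Ctx}, 0 < d.depth → ∀ Δ' : Sequent,
    Reb (c.fill (d.fill [] ++ [.nest Δ'])) (c.fill (d.fill Δ')) := by
  intro c
  induction c with
  | hole Δc =>
    intro d hd Δ'
    cases d with
    | hole => simp [Ctx.depth] at hd
    | nest Δd d₀ =>
      refine reb_build d₀.toP Δ' (Δc ++ Δd) ?_ ?_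
      · refine seqEquiv_of_perm ?_
        have : (Δc ++ SeqElem.nest (d₀.fill []) :: Δd ++ [SeqElem.nest Δ']).Perm
            (SeqElem.nest (d₀.fill []) :: SeqElem.nest Δ' :: (Δc ++ Δd ++ [])) :=
          perm2 Δc _ Δd _ []
        simpa [Ctx.toP_fill, Ctx.fill] using this
      · refine seqEquiv_of_perm ?_
        have := (perm1 Δc (SeqElem.nest (d₀.fill Δ')) Δd).symm
        simpa [Ctx.toP_fill, Ctx.fill] using this
  | nest Δc c' ih =>
    intro d hd Δ'
    exact Reb.inside Δc (ih hd Δ')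

theorem stripf {F M K R : Sequent} {T : Sequent} (hF : fmlOnly F)
    (h : M ++ F = K ++ .nest T :: R) : ∃ R', M = K ++ .nest T :: R' ∧ R = R' ++ F := by
  rcases listsplit h with ⟨K', h1, h2⟩ | ⟨K', h1, h2⟩
  · exact ⟨K', h1, h2⟩
  · exfalso
    have : SeqElem.nest T ∈ F := by rw [h1]; simp
    obtain ⟨A, hA⟩ := hF _ this
    exact SeqElem.noConfusion hA

theorem stripf2 {F M Δ₁ Δ₂ Δ₃ : Sequent} {T₁ T₂ : Sequent} (hF : fmlOnly F)
    (h : M ++ F = Δ₁ ++ .nest T₁ :: Δ₂ ++ .nest T₂ :: Δ₃) :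
    ∃ K, M = Δ₁ ++ .nest T₁ :: Δ₂ ++ .nest T₂ :: K ∧ Δ₃ = K ++ F := by
  have h' : M ++ F = Δ₁ ++ .nest T₁ :: (Δ₂ ++ .nest T₂ :: Δ₃) := by simpa using h
  obtain ⟨R', h1, h2⟩ := stripf hF h'
  obtain ⟨K, h3, h4⟩ := stripf hF h2.symm
  exact ⟨K, by simp [h1, h3], h4⟩

theorem loc1s {M₁ M₂ Δ₁ Δ₂ : Sequent} {s e : SeqElem}
    (h : M₁ ++ s :: M₂ = Δ₁ ++ e :: Δ₂) :
    (∃ K, M₁ = Δ₁ ++ e :: K ∧ Δ₂ = K ++ s :: M₂) ∨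
    (Δ₁ = M₁ ∧ e = s ∧ Δ₂ = M₂) ∨
    (∃ K, M₂ = K ++ e :: Δ₂ ∧ Δ₁ = M₁ ++ s :: K) := by
  rcases listsplit h with ⟨K, h1, h2⟩ | ⟨K, h1, h2⟩
  · exact .inl ⟨K, h1, h2⟩
  · cases K with
    | nil =>
      simp only [List.nil_append] at h1
      obtain ⟨rfl, rfl⟩ := List.cons.inj h1
      exact .inr (.inl ⟨by simpa using h2, rfl, rfl⟩)
    | cons x K =>
      simp only [List.cons_append] at h1
      obtain ⟨rfl, h3⟩ := List.cons.inj h1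
      exact .inr (.inr ⟨K, h3, by simpa using h2⟩)

theorem loc2s {M₁ M₂ Δ₁ Δ₂ Δ₃ : Sequent} {s e₁ e₂ : SeqElem}
    (h : M₁ ++ s :: M₂ = Δ₁ ++ e₁ :: Δ₂ ++ e₂ :: Δ₃) :
    (∃ K, M₁ = Δ₁ ++ e₁ :: Δ₂ ++ e₂ :: K ∧ Δ₃ = K ++ s :: M₂) ∨
    (M₁ = Δ₁ ++ e₁ :: Δ₂ ∧ e₂ = s ∧ Δ₃ = M₂) ∨
    (∃ K K', M₁ = Δ₁ ++ e₁ :: K ∧ Δ₂ = K ++ s :: K' ∧ M₂ = K' ++ e₂ :: Δ₃) ∨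
    (Δ₁ = M₁ ∧ e₁ = s ∧ M₂ = Δ₂ ++ e₂ :: Δ₃) ∨
    (∃ K, Δ₁ = M₁ ++ s :: K ∧ M₂ = K ++ e₁ :: Δ₂ ++ e₂ :: Δ₃) := by
  have h' : M₁ ++ s :: M₂ = Δ₁ ++ e₁ :: (Δ₂ ++ e₂ :: Δ₃) := by simpa using h
  rcases loc1s h' with ⟨K, h1, h2⟩ | ⟨h1, rfl, h3⟩ | ⟨K, h1, h2⟩
  · -- e₁ in M₁ : now split Δ₂ ++ e₂ :: Δ₃ = K ++ s :: M₂
    rcases listsplit h2 with ⟨K', h3, h4⟩ | ⟨K', h3, h4⟩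
    · exact .inr (.inr (.inl ⟨K, K', h1, h3, h4⟩))
    · cases K' with
      | nil =>
        simp only [List.nil_append] at h3
        obtain ⟨rfl, rfl⟩ := List.cons.inj h3
        exact .inr (.inl ⟨by simp [h1, h4], rfl, rfl⟩)
      | cons x K₃ =>
        simp only [List.cons_append] at h3
        obtain ⟨rfl, h5⟩ := List.cons.inj h3
        refine .inl ⟨K₃, by simp [h1, h4], h5⟩
  · exact .inr (.inr (.inr (.inl ⟨h1, rfl, h3.symm⟩)))
  · exact .inr (.inr (.inr (.inr ⟨K, h2, by simpa using h1⟩)))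

theorem seqEquiv_of_eq {Γ Δ : Sequent} (h : Γ = Δ) : SeqEquiv Γ Δ := h ▸ seqEquiv_refl _

theorem fmlOnly_nil : fmlOnly [] := fun e he => absurd he List.not_mem_nil

/-- Two decompositions of one tree: a context with its hole filled by `[]` that equals
a `(c0, p, F)`-pattern; inserting `U` at the first hole is compatible with refilling. -/
theorem twohole : ∀ (g c0 p : PCtx) (F U : Sequent), fmlOnly F →
    g.fill [] = c0.fill (p.fill [] ++ F) →
    ∃ c1 p' : PCtx, p.depth ≤ p'.depth ∧
      (∀ Δp, p = .phole Δp → ∃ Δp', p' = .phole Δp') ∧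
      SeqEquiv (g.fill U) (c1.fill (p'.fill [] ++ F)) ∧
      ∀ Y W, ∃ gyw : PCtx, gyw.fill [] = c0.fill (p.fill Y ++ W) ∧
        SeqEquiv (gyw.fill U) (c1.fill (p'.fill Y ++ W)) := by
  intro g
  induction g with
  | phole Δg =>
    intro c0 p F U hF hEq
    cases c0 with
    | pnest Δ₁ c' Δ₂ =>
      have hΔg : Δg = Δ₁ ++ .nest (c'.fill (p.fill [] ++ F)) :: Δ₂ := by
        simpa [PCtx.fill] using hEq
      refine ⟨.pnest Δ₁ c' (Δ₂ ++ U), p, le_rfl, fun Δp hp => ⟨Δp, hp⟩, ?_, fun Y W => ?_⟩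
      · exact seqEquiv_of_eq (by simp [PCtx.fill, hΔg])
      · exact ⟨.phole (PCtx.fill (.pnest Δ₁ c' Δ₂) (p.fill Y ++ W)), by simp [PCtx.fill],
          seqEquiv_of_eq (by simp [PCtx.fill])⟩
    | phole Δc =>
      cases p with
      | pnest pΔ₁ p₀ pΔ₂ =>
        have hΔg : Δg = Δc ++ pΔ₁ ++ .nest (p₀.fill []) :: pΔ₂ ++ F := by
          simpa [PCtx.fill] using hEq
        refine ⟨.phole Δc, .pnest pΔ₁ p₀ (pΔ₂ ++ U), le_rfl,
          fun Δp hp => PCtx.noConfusion hp, ?_, fun Y W => ?_⟩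
        · refine seqEquiv_of_perm ?_
          rw [hΔg]
          simp only [PCtx.fill, List.append_assoc, List.append_nil]
          refine List.Perm.append_left Δc (List.Perm.append_left pΔ₁ (List.Perm.cons _ ?_))
          simpa using (List.perm_append_comm (l₁ := F) (l₂ := U)).append_left pΔ₂
        · refine ⟨.phole (Δc ++ ((PCtx.pnest pΔ₁ p₀ pΔ₂).fill Y ++ W)),
            by simp [PCtx.fill], ?_⟩
          refine seqEquiv_of_perm ?_
          simp only [PCtx.fill, List.append_assoc, List.append_nil]
          refine List.Perm.append_left Δc (List.Perm.append_left pΔ₁ (List.Perm.cons _ ?_))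
          simpa using (List.perm_append_comm (l₁ := W) (l₂ := U)).append_left pΔ₂
      | phole pΔ =>
        have hΔg : Δg = Δc ++ pΔ ++ F := by simpa [PCtx.fill] using hEq
        refine ⟨.phole Δc, .phole (pΔ ++ U), le_rfl, fun Δp hp => ⟨pΔ ++ U, rfl⟩, ?_,
          fun Y W => ?_⟩
        · refine seqEquiv_of_perm ?_
          rw [hΔg]
          simp only [PCtx.fill, List.append_assoc, List.append_nil]
          refine List.Perm.append_left Δc (List.Perm.append_left pΔ ?_)
          exact List.perm_append_comm
        · refine ⟨.phole (Δc ++ (pΔ ++ Y ++ W)), by simp [PCtx.fill], ?_⟩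
          refine seqEquiv_of_perm ?_
          simp only [PCtx.fill, List.append_assoc, List.append_nil]
          refine List.Perm.append_left Δc (List.Perm.append_left pΔ ?_)
          have : ((Y ++ W) ++ U).Perm (U ++ (Y ++ W)) := List.perm_append_comm
          simpa [List.append_assoc] using this
  | pnest Δg₁ g₀ Δg₂ ih =>
    intro c0 p F U hF hEq
    cases c0 with
    | pnest c0Δ₁ c' c0Δ₂ =>
      simp only [PCtx.fill] at hEq
      rcases loc1s hEq.symm with ⟨K, hK1, hK2⟩ | ⟨h1, h2, h3⟩ | ⟨K, hK1, hK2⟩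
      · -- marked elem inside c0Δ₁ : inert insertion
        refine ⟨.pnest (Δg₁ ++ .nest (g₀.fill U) :: K) c' c0Δ₂, p, le_rfl,
          fun Δp hp => ⟨Δp, hp⟩, ?_, fun Y W => ?_⟩
        · exact seqEquiv_of_eq (by simp [PCtx.fill, hK2])
        · exact ⟨.pnest Δg₁ g₀ (K ++ .nest (c'.fill (p.fill Y ++ W)) :: c0Δ₂),
            by simp [PCtx.fill, hK1], seqEquiv_of_eq (by simp [PCtx.fill])⟩
      · -- marked elem is the spine : recurse
        subst h1; subst h3
        have hspine : g₀.fill [] = c'.fill (p.fill [] ++ F) := by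
          injection h2 with h4
        obtain ⟨c1i, p'i, hdepi, hpresi, hdiri, hfami⟩ := ih c' p F U hF hspine
        refine ⟨.pnest Δg₁ c1i Δg₂, p'i, hdepi, hpresi, ?_, fun Y W => ?_⟩
        · simp only [PCtx.fill]
          exact seqEquiv_ins (.nest hdiri) (seqEquiv_refl _)
        · obtain ⟨giyw, hg1, hg2⟩ := hfami Y W
          refine ⟨.pnest Δg₁ giyw Δg₂, by simp [PCtx.fill, hg1], ?_⟩
          simp only [PCtx.fill]
          exact seqEquiv_ins (.nest hg2) (seqEquiv_refl _)
      · -- marked elem inside c0Δ₂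
        refine ⟨.pnest c0Δ₁ c' (K ++ .nest (g₀.fill U) :: Δg₂), p, le_rfl,
          fun Δp hp => ⟨Δp, hp⟩, ?_, fun Y W => ?_⟩
        · exact seqEquiv_of_eq (by simp [PCtx.fill, hK2])
        · exact ⟨.pnest (c0Δ₁ ++ .nest (c'.fill (p.fill Y ++ W)) :: K) g₀ Δg₂,
            by simp [PCtx.fill, hK1], seqEquiv_of_eq (by simp [PCtx.fill, hK2])⟩
    | phole Δc =>
      cases p with
      | pnest pΔ₁ p₀ pΔ₂ =>
        have hEq' : (Δc ++ pΔ₁) ++ .nest (p₀.fill []) :: (pΔ₂ ++ F)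
            = Δg₁ ++ .nest (g₀.fill []) :: Δg₂ := by
          simpa [PCtx.fill, List.append_assoc] using hEq.symm
        rcases loc1s hEq' with ⟨K, hK1, hK2⟩ | ⟨h1, h2, h3⟩ | ⟨K, hK1, hK2⟩
        · -- inert, inside Δc ++ pΔ₁
          refine ⟨.phole [], .pnest (Δg₁ ++ .nest (g₀.fill U) :: K) p₀ pΔ₂, le_rfl,
            fun Δp hp => PCtx.noConfusion hp, ?_, fun Y W => ?_⟩
          · exact seqEquiv_of_eq (by simp [PCtx.fill, hK2])
          · refine ⟨.pnest Δg₁ g₀ (K ++ .nest (p₀.fill Y) :: (pΔ₂ ++ W)), ?_,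
              seqEquiv_of_eq (by simp [PCtx.fill])⟩
            have hK1' : ∀ T, Δc ++ (pΔ₁ ++ T)
                = Δg₁ ++ SeqElem.nest (g₀.fill []) :: (K ++ T) := fun T => by
              rw [← List.append_assoc, hK1]; simp
            simp [PCtx.fill, hK1']
        · -- spine of p : recurse
          subst h1; subst h3
          have hspine : g₀.fill [] = (PCtx.phole []).fill (p₀.fill [] ++ []) := by
            injection h2 with h4
            simp [PCtx.fill, h4]
          obtain ⟨c1i, p'i, hdepi, hpresi, hdiri, hfami⟩ := ih (.phole []) p₀ [] U fmlOnly_nil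
            hspine
          refine ⟨.phole [], .pnest (Δc ++ pΔ₁) (c1i.comp p'i) pΔ₂, ?_,
            fun Δp hp => PCtx.noConfusion hp, ?_, fun Y W => ?_⟩
          · simp only [PCtx.depth, PCtx.comp_depth]; omega
          · have base := seqEquiv_ins (Γ₁ := Δc ++ pΔ₁) (Γ₂ := pΔ₂ ++ F)
              (Δ₁ := Δc ++ pΔ₁) (Δ₂ := pΔ₂ ++ F)
              (EE.nest (show SeqEquiv (g₀.fill U) (c1i.fill (p'i.fill [])) from by
                simpa [PCtx.fill] using hdiri)) (seqEquiv_refl _)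
            simpa [PCtx.fill, PCtx.comp_fill, List.append_assoc] using base
          · obtain ⟨giy, hg1, hg2⟩ := hfami Y []
            refine ⟨.pnest (Δc ++ pΔ₁) giy (pΔ₂ ++ W), ?_, ?_⟩
            · simp only [PCtx.fill, List.nil_append, List.append_nil] at hg1 ⊢
              simp [hg1, List.append_assoc]
            · have base := seqEquiv_ins (Γ₁ := Δc ++ pΔ₁) (Γ₂ := pΔ₂ ++ W)
                (Δ₁ := Δc ++ pΔ₁) (Δ₂ := pΔ₂ ++ W)
                (EE.nest (show SeqEquiv (giy.fill U) (c1i.fill (p'i.fill Y)) from by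
                  simpa [PCtx.fill] using hg2)) (seqEquiv_refl _)
              simpa [PCtx.fill, PCtx.comp_fill, List.append_assoc] using base
        · -- inert, inside pΔ₂ (++ F)
          obtain ⟨R', hp2, hg2⟩ := stripf hF hK1
          refine ⟨.phole [], .pnest (Δc ++ pΔ₁) p₀ (K ++ .nest (g₀.fill U) :: R'), le_rfl,
            fun Δp hp => PCtx.noConfusion hp, ?_, fun Y W => ?_⟩
          · exact seqEquiv_of_eq (by simp [PCtx.fill, hK2, hg2])
          · exact ⟨.pnest (Δc ++ pΔ₁ ++ .nest (p₀.fill Y) :: K) g₀ (R' ++ W),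
              by simp [PCtx.fill, hp2, hK2], seqEquiv_of_eq (by simp [PCtx.fill])⟩
      | phole pΔ =>
        have hEq' : (Δc ++ pΔ) ++ F = Δg₁ ++ .nest (g₀.fill []) :: Δg₂ := by
          simpa [PCtx.fill, List.append_assoc] using hEq.symm
        obtain ⟨R', hM, hR⟩ := stripf hF hEq'
        refine ⟨.phole [], .phole (Δg₁ ++ .nest (g₀.fill U) :: R'), le_rfl,
          fun Δp hp => ⟨_, rfl⟩, ?_, fun Y W => ?_⟩
        · exact seqEquiv_of_eq (by simp [PCtx.fill, hR])
        · refine ⟨.pnest Δg₁ g₀ (R' ++ (Y ++ W)), ?_, seqEquiv_of_eq (by simp [PCtx.fill])⟩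
          simp only [PCtx.fill]
          rw [show Δg₁ ++ SeqElem.nest (g₀.fill []) :: (R' ++ (Y ++ W))
              = (Δg₁ ++ SeqElem.nest (g₀.fill []) :: R') ++ (Y ++ W) by simp, ← hM]
          simp

theorem seqEquiv_pullE {L B₁ B₂ : Sequent} {e : SeqElem} (hL : L = B₁ ++ e :: B₂) :
    SeqEquiv L (e :: (B₁ ++ B₂)) := by
  subst hL; exact seqEquiv_of_perm List.perm_middle

theorem seqEquiv_pushE {L' B₁ B₂ : Sequent} {e : SeqElem} (hL : B₁ ++ e :: B₂ = L') :
    SeqEquiv (e :: (B₁ ++ B₂)) L' := by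
  subst hL; exact seqEquiv_of_perm List.perm_middle.symm

theorem seqEquiv_pull2E {L B₁ B₂ B₃ : Sequent} {e f : SeqElem}
    (hL : L = B₁ ++ e :: B₂ ++ f :: B₃) :
    SeqEquiv L (e :: f :: (B₁ ++ (B₂ ++ B₃))) := by
  subst hL
  refine seqEquiv_of_perm ?_
  simpa [List.append_assoc] using perm2 B₁ e B₂ f B₃

theorem seqEquiv_pull2E' {L B₁ B₂ B₃ : Sequent} {e f : SeqElem}
    (hL : L = B₁ ++ e :: B₂ ++ f :: B₃) :
    SeqEquiv L (f :: e :: (B₁ ++ (B₂ ++ B₃))) :=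
  (seqEquiv_pull2E hL).trans (.swap _ _ _)

theorem seqEquiv_pushE' {L' B₁ B₂ B₃ : Sequent} {e : SeqElem}
    (hL : B₁ ++ B₂ ++ e :: B₃ = L') :
    SeqEquiv (e :: (B₁ ++ (B₂ ++ B₃))) L' := by
  subst hL
  refine seqEquiv_of_perm ?_
  have := (perm1 (B₁ ++ B₂) e B₃).symm
  simpa [List.append_assoc] using this

/-- The master simulation lemma. -/
theorem super : ∀ {G G' : Sequent}, Reb G G' → ∀ (c0 p : PCtx) (F : Sequent), fmlOnly F →
    SeqEquiv G (c0.fill (p.fill [] ++ F)) →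
    ∃ c1 p' : PCtx, p.depth ≤ p'.depth ∧
      (∀ Δp, p = .phole Δp → ∃ Δp', p' = .phole Δp') ∧
      SeqEquiv G' (c1.fill (p'.fill [] ++ F)) ∧
      ∀ Y W, ∃ Gyw, Reb (c0.fill (p.fill Y ++ W)) Gyw ∧
        SeqEquiv Gyw (c1.fill (p'.fill Y ++ W)) := by
  intro G G' hreb
  induction hreb with
  | @equiv Γ₀ Γ Γ' Γ'₀ hl _ hr ih =>
    intro c0 p F hF h
    obtain ⟨c1, p', h1, h2, h3, h4⟩ := ih c0 p F hF ((seqEquiv_symm hl).trans h)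
    exact ⟨c1, p', h1, h2, (seqEquiv_symm hr).trans h3, h4⟩
  | @inside S S' R hrebS ihS =>
    intro c0 p F hF h
    obtain ⟨A₁, e', A₂, hfill, hee, hrest⟩ := seqEquiv_extract (Γ₁ := []) h
    cases hee with
    | @nest _ T hST =>
    have rebT : Reb T S' := .equiv (seqEquiv_symm hST) hrebS (seqEquiv_refl S')
    cases c0 with
    | pnest c0Δ₁ c' c0Δ₂ =>
      have hfill' : c0Δ₁ ++ SeqElem.nest (c'.fill (p.fill [] ++ F)) :: c0Δ₂
          = A₁ ++ SeqElem.nest T :: A₂ := by simpa [PCtx.fill] using hfill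
      rcases loc1s hfill' with ⟨K, hK1, hK2⟩ | ⟨h1, h2, h3⟩ | ⟨K, hK1, hK2⟩
      · -- inert in c0Δ₁
        refine ⟨.pnest (A₁ ++ SeqElem.nest S' :: K) c' c0Δ₂, p, le_rfl,
          fun Δp hp => ⟨Δp, hp⟩, ?_, fun Y W => ?_⟩
        · refine (seqEquiv_ins (Γ₁ := []) (Δ₁ := A₁)
            (Δ₂ := K ++ SeqElem.nest (c'.fill (p.fill [] ++ F)) :: c0Δ₂)
            (.nest (seqEquiv_refl S')) ?_).trans (seqEquiv_of_eq (by simp [PCtx.fill]))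
          simpa [hK2] using hrest
        · refine ⟨_, reb_inside_at
            (R := A₁ ++ (K ++ SeqElem.nest (c'.fill (p.fill Y ++ W)) :: c0Δ₂))
            (seqEquiv_pullE (by simp [PCtx.fill, hK1])) rebT
            (seqEquiv_pushE (by simp [PCtx.fill])),
            seqEquiv_refl _⟩
      · -- spine
        have hT : T = c'.fill (p.fill [] ++ F) := by injection h2
        subst hT h1 h3
        obtain ⟨c1i, p'i, hdepi, hpresi, hconci, htransi⟩ := ihS c' p F hF hST
        refine ⟨.pnest A₁ c1i A₂, p'i, hdepi, hpresi, ?_, fun Y W => ?_⟩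
        · exact (seqEquiv_ins (Γ₁ := []) (.nest hconci) hrest).trans
            (seqEquiv_of_eq (by simp [PCtx.fill]))
        · obtain ⟨Syw, rebS, hSyw⟩ := htransi Y W
          refine ⟨A₁ ++ SeqElem.nest Syw :: A₂, reb_inside_at (R := A₁ ++ A₂)
            (seqEquiv_pullE (by simp [PCtx.fill])) rebS (seqEquiv_pushE rfl), ?_⟩
          exact (seqEquiv_ins (Γ₁ := A₁) (.nest hSyw) (seqEquiv_refl _)).trans
            (seqEquiv_of_eq (by simp [PCtx.fill]))
      · -- inert in c0Δ₂
        refine ⟨.pnest c0Δ₁ c' (K ++ SeqElem.nest S' :: A₂), p, le_rfl,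
          fun Δp hp => ⟨Δp, hp⟩, ?_, fun Y W => ?_⟩
        · refine (seqEquiv_ins (Γ₁ := []) (Δ₁ := A₁) (Δ₂ := A₂)
            (.nest (seqEquiv_refl S')) ?_).trans (seqEquiv_of_eq (by simp [PCtx.fill, hK2]))
          simpa using hrest
        · refine ⟨_, reb_inside_at
            (R := (c0Δ₁ ++ SeqElem.nest (c'.fill (p.fill Y ++ W)) :: K) ++ A₂)
            (seqEquiv_pullE (by simp [PCtx.fill, hK1])) rebT
            (seqEquiv_pushE (by simp [PCtx.fill])),
            seqEquiv_refl _⟩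
    | phole Δc =>
      cases p with
      | pnest pΔ₁ p₀ pΔ₂ =>
        have hfill' : (Δc ++ pΔ₁) ++ SeqElem.nest (p₀.fill []) :: (pΔ₂ ++ F)
            = A₁ ++ SeqElem.nest T :: A₂ := by simpa [PCtx.fill, List.append_assoc] using hfill
        rcases loc1s hfill' with ⟨K, hK1, hK2⟩ | ⟨h1, h2, h3⟩ | ⟨K, hK1, hK2⟩
        · -- inert in Δc ++ pΔ₁
          refine ⟨.phole [], .pnest (A₁ ++ SeqElem.nest S' :: K) p₀ pΔ₂, le_rfl,
            fun Δp hp => PCtx.noConfusion hp, ?_, fun Y W => ?_⟩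
          · refine (seqEquiv_ins (Γ₁ := []) (Δ₁ := A₁)
              (Δ₂ := K ++ SeqElem.nest (p₀.fill []) :: (pΔ₂ ++ F))
              (.nest (seqEquiv_refl S')) ?_).trans (seqEquiv_of_eq (by simp [PCtx.fill]))
            simpa [hK2] using hrest
          · refine ⟨_, reb_inside_at
              (R := A₁ ++ (K ++ SeqElem.nest (p₀.fill Y) :: (pΔ₂ ++ W)))
              (seqEquiv_pullE (B₁ := A₁) ?_) rebT (seqEquiv_pushE (by simp [PCtx.fill])),
              seqEquiv_refl _⟩
            have hK1' : ∀ X, Δc ++ (pΔ₁ ++ X) = A₁ ++ SeqElem.nest T :: (K ++ X) := fun X => by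
              rw [← List.append_assoc, hK1]; simp
            simp [PCtx.fill, hK1']
        · -- spine of p
          have hT : T = p₀.fill [] := by injection h2
          subst hT
          have hST' : SeqEquiv S ((PCtx.phole []).fill (p₀.fill [] ++ [])) := by
            simpa [PCtx.fill] using hST
          obtain ⟨c1i, p'i, hdepi, hpresi, hconci, htransi⟩ := ihS (.phole []) p₀ [] fmlOnly_nil
            hST'
          refine ⟨.phole [], .pnest A₁ (c1i.comp p'i) pΔ₂, ?_,
            fun Δp hp => PCtx.noConfusion hp, ?_, fun Y W => ?_⟩
          · simp only [PCtx.depth, PCtx.comp_depth]; omega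
          · refine (seqEquiv_ins (Γ₁ := []) (Δ₁ := A₁) (Δ₂ := pΔ₂ ++ F)
              (.nest (show SeqEquiv S' (c1i.fill (p'i.fill [])) from by
                simpa [PCtx.fill] using hconci)) ?_).trans
              (seqEquiv_of_eq (by simp [PCtx.fill, PCtx.comp_fill]))
            simpa [h3] using hrest
          · obtain ⟨Sy, rebS, hSy⟩ := htransi Y []
            have rebS' : Reb (p₀.fill Y) Sy := by
              have : (PCtx.phole []).fill (p₀.fill Y ++ []) = p₀.fill Y := by simp [PCtx.fill]
              rwa [this] at rebS
            refine ⟨A₁ ++ SeqElem.nest Sy :: (pΔ₂ ++ W), reb_inside_at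
              (R := A₁ ++ (pΔ₂ ++ W)) (seqEquiv_pullE (B₁ := A₁) ?_) rebS'
              (seqEquiv_pushE rfl), ?_⟩
            · have : ∀ X, Δc ++ (pΔ₁ ++ X) = A₁ ++ X := fun X => by
                rw [← List.append_assoc, ← h1]
              simp [PCtx.fill, this]
            · refine (seqEquiv_ins (Γ₁ := A₁) (Δ₁ := A₁) (Δ₂ := pΔ₂ ++ W)
                (.nest (show SeqEquiv Sy (c1i.fill (p'i.fill Y)) from by
                  simpa [PCtx.fill] using hSy)) (seqEquiv_refl _)).trans
                (seqEquiv_of_eq (by simp [PCtx.fill, PCtx.comp_fill]))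
        · -- inert in pΔ₂ ++ F
          obtain ⟨R', hpΔ₂, hA₂⟩ := stripf hF hK1
          refine ⟨.phole [], .pnest (Δc ++ pΔ₁) p₀ (K ++ SeqElem.nest S' :: R'), le_rfl,
            fun Δp hp => PCtx.noConfusion hp, ?_, fun Y W => ?_⟩
          · refine (seqEquiv_ins (Γ₁ := []) (Δ₁ := A₁) (Δ₂ := A₂)
              (.nest (seqEquiv_refl S')) ?_).trans
              (seqEquiv_of_eq (by simp [PCtx.fill, hK2, hA₂]))
            simpa using hrest
          · refine ⟨_, reb_inside_at
              (R := ((Δc ++ pΔ₁) ++ SeqElem.nest (p₀.fill Y) :: K) ++ (R' ++ W))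
              (seqEquiv_pullE ?_) rebT (seqEquiv_pushE (by simp [PCtx.fill])),
              seqEquiv_refl _⟩
            simp [PCtx.fill, hpΔ₂]
      | phole pΔ =>
        have hfill' : (Δc ++ pΔ) ++ F = A₁ ++ SeqElem.nest T :: A₂ := by
          simpa [PCtx.fill, List.append_assoc] using hfill
        obtain ⟨R', hM, hA₂⟩ := stripf hF hfill'
        refine ⟨.phole [], .phole (A₁ ++ SeqElem.nest S' :: R'), le_rfl,
          fun Δp hp => ⟨_, rfl⟩, ?_, fun Y W => ?_⟩
        · refine (seqEquiv_ins (Γ₁ := []) (Δ₁ := A₁) (Δ₂ := A₂)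
            (.nest (seqEquiv_refl S')) ?_).trans
            (seqEquiv_of_eq (by simp [PCtx.fill, hA₂]))
          simpa using hrest
        · refine ⟨_, reb_inside_at (R := A₁ ++ (R' ++ (Y ++ W)))
            (seqEquiv_pullE ?_) rebT (seqEquiv_pushE (by simp [PCtx.fill])),
            seqEquiv_refl _⟩
          have : ∀ X, Δc ++ (pΔ ++ X) = A₁ ++ SeqElem.nest T :: (R' ++ X) := fun X => by
            rw [← List.append_assoc, hM]; simp
          simp [PCtx.fill, this]
  | @graft g U₀ R =>
    intro c0 p F hF h
    obtain ⟨Δ₁, f₁, Δ₂, f₂, Δ₃, hfill, hflag, hrest⟩ := seqEquiv_extract2 h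
    rcases hflag with ⟨he1, he2⟩ | ⟨he1, he2⟩
    · -- role I : f₁ is the receiver image, f₂ the consumed image
      cases he1 with
      | @nest _ T hgT =>
      obtain ⟨g', rfl, hgg'⟩ := fillinv g hgT
      cases he2 with
      | @nest _ U hU =>
      have hchainU : SeqEquiv (g.fill U₀) (g'.fill U) := (hgg' U₀).trans (g'.fillcong hU)
      cases c0 with
      | pnest c0Δ₁ c' c0Δ₂ =>
        have hfill' : c0Δ₁ ++ SeqElem.nest (c'.fill (p.fill [] ++ F)) :: c0Δ₂
            = Δ₁ ++ SeqElem.nest (g'.fill []) :: Δ₂ ++ SeqElem.nest U :: Δ₃ := by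
          simpa [PCtx.fill] using hfill
        rcases loc2s hfill' with ⟨K, hK1, hK2⟩ | ⟨hK1, hs, hK2⟩ | ⟨K, K', hK1, hK2, hK3⟩
          | ⟨hK1, hs, hK2⟩ | ⟨K, hK1, hK2⟩
        · -- C1 : both inert in c0Δ₁
          refine ⟨.pnest (Δ₁ ++ SeqElem.nest (g'.fill U) :: (Δ₂ ++ K)) c' c0Δ₂, p, le_rfl,
            fun Δp hp => ⟨Δp, hp⟩, ?_, fun Y W => ?_⟩
          · refine (seqEquiv_consE (.nest hchainU) (hrest.trans
              (seqEquiv_of_eq (by simp [hK2])))).trans (seqEquiv_pushE (B₁ := Δ₁)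
              (B₂ := Δ₂ ++ (K ++ SeqElem.nest (c'.fill (p.fill [] ++ F)) :: c0Δ₂))
              (by simp [PCtx.fill]))
          · refine ⟨_, reb_build g' U
              (Δ₁ ++ (Δ₂ ++ (K ++ SeqElem.nest (c'.fill (p.fill Y ++ W)) :: c0Δ₂)))
              (seqEquiv_pull2E (by simp [PCtx.fill, hK1]))
              (seqEquiv_pushE (by simp [PCtx.fill])), seqEquiv_refl _⟩
        · -- C2 : consumed is the spine, re-route
          have hU2 : U = c'.fill (p.fill [] ++ F) := by injection hs
          refine ⟨.pnest Δ₁ (g'.comp c') (Δ₂ ++ c0Δ₂), p, le_rfl,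
            fun Δp hp => ⟨Δp, hp⟩, ?_, fun Y W => ?_⟩
          · refine (seqEquiv_consE (.nest ((hgg' U₀).trans (g'.fillcong
              (hU.trans (seqEquiv_of_eq hU2))))) (hrest.trans
              (seqEquiv_of_eq (by simp [hK2])))).trans
              (seqEquiv_pushE (B₁ := Δ₁) (B₂ := Δ₂ ++ c0Δ₂) (by simp [PCtx.fill]))
          · refine ⟨_, reb_build g' (c'.fill (p.fill Y ++ W)) (Δ₁ ++ (Δ₂ ++ c0Δ₂))
              (seqEquiv_pull2E (by simp [PCtx.fill, hK1]))
              (seqEquiv_pushE (by simp [PCtx.fill])), seqEquiv_refl _⟩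
        · -- C3 : receiver in c0Δ₁, consumed in c0Δ₂
          refine ⟨.pnest (Δ₁ ++ SeqElem.nest (g'.fill U) :: K) c' (K' ++ Δ₃), p, le_rfl,
            fun Δp hp => ⟨Δp, hp⟩, ?_, fun Y W => ?_⟩
          · refine (seqEquiv_consE (.nest hchainU) (hrest.trans
              (seqEquiv_of_eq (by simp [hK2])))).trans (seqEquiv_pushE (B₁ := Δ₁)
              (B₂ := K ++ SeqElem.nest (c'.fill (p.fill [] ++ F)) :: (K' ++ Δ₃))
              (by simp [PCtx.fill]))
          · refine ⟨_, reb_build g' U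
              (Δ₁ ++ ((K ++ SeqElem.nest (c'.fill (p.fill Y ++ W)) :: K') ++ Δ₃))
              (seqEquiv_pull2E (by simp [PCtx.fill, hK1, hK3]))
              (seqEquiv_pushE (by simp [PCtx.fill])), seqEquiv_refl _⟩
        · -- C4 : receiver is the spine, two-hole
          have hg'c : g'.fill [] = c'.fill (p.fill [] ++ F) := by injection hs
          obtain ⟨c1i, p'i, hdepi, hpresi, hdiri, hfami⟩ := twohole g' c' p F U hF hg'c
          refine ⟨.pnest Δ₁ c1i (Δ₂ ++ Δ₃), p'i, hdepi, hpresi, ?_, fun Y W => ?_⟩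
          · refine (seqEquiv_consE (.nest ((hchainU).trans hdiri)) (hrest.trans
              (seqEquiv_of_eq (by simp)))).trans (seqEquiv_pushE (B₁ := Δ₁)
              (B₂ := Δ₂ ++ Δ₃) (by simp [PCtx.fill]))
          · obtain ⟨gyw, hg1, hg2⟩ := hfami Y W
            refine ⟨_, reb_build gyw U (Δ₁ ++ (Δ₂ ++ Δ₃))
              (seqEquiv_pull2E (by simp [PCtx.fill, hK1, hK2, ← hg1]))
              (seqEquiv_refl _),
              (seqEquiv_consE (.nest hg2) (seqEquiv_refl _)).trans
                (seqEquiv_pushE (by simp [PCtx.fill]))⟩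
        · -- C5 : both inert in c0Δ₂
          refine ⟨.pnest c0Δ₁ c' (K ++ SeqElem.nest (g'.fill U) :: (Δ₂ ++ Δ₃)), p, le_rfl,
            fun Δp hp => ⟨Δp, hp⟩, ?_, fun Y W => ?_⟩
          · refine (seqEquiv_consE (.nest hchainU) (hrest.trans
              (seqEquiv_of_eq (by simp)))).trans (seqEquiv_pushE (B₁ := Δ₁)
              (B₂ := Δ₂ ++ Δ₃) (by simp [PCtx.fill, hK1]))
          · refine ⟨_, reb_build g' U
              ((c0Δ₁ ++ SeqElem.nest (c'.fill (p.fill Y ++ W)) :: K) ++ (Δ₂ ++ Δ₃))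
              (seqEquiv_pull2E (by simp [PCtx.fill, hK2]))
              (seqEquiv_pushE (by simp [PCtx.fill])), seqEquiv_refl _⟩
      | phole Δc =>
        cases p with
        | pnest pΔ₁ p₀ pΔ₂ =>
          have hfill' : (Δc ++ pΔ₁) ++ SeqElem.nest (p₀.fill []) :: (pΔ₂ ++ F)
              = Δ₁ ++ SeqElem.nest (g'.fill []) :: Δ₂ ++ SeqElem.nest U :: Δ₃ := by
            simpa [PCtx.fill, List.append_assoc] using hfill
          rcases loc2s hfill' with ⟨K, hK1, hK2⟩ | ⟨hK1, hs, hK2⟩ | ⟨K, K', hK1, hK2, hK3⟩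
            | ⟨hK1, hs, hK2⟩ | ⟨K, hK1, hK2⟩
          · -- C1 : both inert in Δc ++ pΔ₁
            have hK1' : ∀ X, Δc ++ (pΔ₁ ++ X) = Δ₁ ++ SeqElem.nest (g'.fill [])
                :: (Δ₂ ++ SeqElem.nest U :: (K ++ X)) := fun X => by
              rw [← List.append_assoc, hK1]; simp
            refine ⟨.phole [], .pnest (Δ₁ ++ SeqElem.nest (g'.fill U) :: (Δ₂ ++ K)) p₀ pΔ₂,
              le_rfl, fun Δp hp => PCtx.noConfusion hp, ?_, fun Y W => ?_⟩
            · refine (seqEquiv_consE (.nest hchainU) (hrest.trans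
                (seqEquiv_of_eq (by simp [hK2])))).trans (seqEquiv_pushE (B₁ := Δ₁)
                (B₂ := Δ₂ ++ (K ++ SeqElem.nest (p₀.fill []) :: (pΔ₂ ++ F)))
                (by simp [PCtx.fill]))
            · refine ⟨_, reb_build g' U
                (Δ₁ ++ (Δ₂ ++ (K ++ SeqElem.nest (p₀.fill Y) :: (pΔ₂ ++ W))))
                (seqEquiv_pull2E (by simp [PCtx.fill, hK1']))
                (seqEquiv_pushE (by simp [PCtx.fill])), seqEquiv_refl _⟩
          · -- C2 : consumed is the spine, re-route
            have hU2 : U = p₀.fill [] := by injection hs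
            have hK1' : ∀ X, Δc ++ (pΔ₁ ++ X) = Δ₁ ++ SeqElem.nest (g'.fill [])
                :: (Δ₂ ++ X) := fun X => by
              rw [← List.append_assoc, hK1]; simp
            refine ⟨.phole [], .pnest Δ₁ (g'.comp p₀) (Δ₂ ++ pΔ₂), ?_,
              fun Δp hp => PCtx.noConfusion hp, ?_, fun Y W => ?_⟩
            · simp only [PCtx.depth, PCtx.comp_depth]; omega
            · refine (seqEquiv_consE (.nest ((hgg' U₀).trans (g'.fillcong
                (hU.trans (seqEquiv_of_eq hU2))))) (hrest.trans
                (seqEquiv_of_eq (by simp [hK2])))).trans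
                (seqEquiv_pushE (B₁ := Δ₁) (B₂ := Δ₂ ++ (pΔ₂ ++ F)) (by simp [PCtx.fill]))
            · refine ⟨_, reb_build g' (p₀.fill Y) (Δ₁ ++ (Δ₂ ++ (pΔ₂ ++ W)))
                (seqEquiv_pull2E (by simp [PCtx.fill, hK1']))
                (seqEquiv_pushE (by simp [PCtx.fill])), seqEquiv_refl _⟩
          · -- C3 : receiver in Δc ++ pΔ₁, consumed in pΔ₂
            obtain ⟨R', hpΔ₂, hΔ₃⟩ := stripf hF hK3
            have hK1' : ∀ X, Δc ++ (pΔ₁ ++ X) = Δ₁ ++ SeqElem.nest (g'.fill [])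
                :: (K ++ X) := fun X => by
              rw [← List.append_assoc, hK1]; simp
            refine ⟨.phole [], .pnest (Δ₁ ++ SeqElem.nest (g'.fill U) :: K) p₀ (K' ++ R'),
              le_rfl, fun Δp hp => PCtx.noConfusion hp, ?_, fun Y W => ?_⟩
            · refine (seqEquiv_consE (.nest hchainU) (hrest.trans
                (seqEquiv_of_eq (by simp [hK2, hΔ₃])))).trans (seqEquiv_pushE (B₁ := Δ₁)
                (B₂ := K ++ SeqElem.nest (p₀.fill []) :: (K' ++ (R' ++ F)))
                (by simp [PCtx.fill]))
            · refine ⟨_, reb_build g' U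
                (Δ₁ ++ ((K ++ SeqElem.nest (p₀.fill Y) :: K') ++ (R' ++ W)))
                (seqEquiv_pull2E (by simp [PCtx.fill, hK1', hpΔ₂]))
                (seqEquiv_pushE (by simp [PCtx.fill])), seqEquiv_refl _⟩
          · -- C4 : receiver is the spine, two-hole
            have hg'c : g'.fill [] = p₀.fill [] := by injection hs
            obtain ⟨R', hpΔ₂, hΔ₃⟩ := stripf hF hK2
            obtain ⟨c1i, p'i, hdepi, hpresi, hdiri, hfami⟩ := twohole g' (.phole []) p₀ [] U
              fmlOnly_nil (by simp [PCtx.fill, hg'c])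
            have hK1' : ∀ X, Δc ++ (pΔ₁ ++ X) = Δ₁ ++ X := fun X => by
              rw [← List.append_assoc, ← hK1]
            refine ⟨.phole [], .pnest Δ₁ (c1i.comp p'i) (Δ₂ ++ R'), ?_,
              fun Δp hp => PCtx.noConfusion hp, ?_, fun Y W => ?_⟩
            · simp only [PCtx.depth, PCtx.comp_depth]; omega
            · refine (seqEquiv_consE (.nest (hchainU.trans
                (show SeqEquiv (g'.fill U) (c1i.fill (p'i.fill [])) from by
                  simpa [PCtx.fill] using hdiri))) (hrest.trans
                (seqEquiv_of_eq (by simp [hΔ₃])))).trans (seqEquiv_pushE (B₁ := Δ₁)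
                (B₂ := Δ₂ ++ (R' ++ F)) (by simp [PCtx.fill, PCtx.comp_fill]))
            · obtain ⟨gy, hg1, hg2⟩ := hfami Y []
              have hg1' : gy.fill [] = p₀.fill Y := by simpa [PCtx.fill] using hg1
              refine ⟨_, reb_build gy U (Δ₁ ++ (Δ₂ ++ (R' ++ W)))
                (seqEquiv_pull2E (by simp [PCtx.fill, hK1', hpΔ₂, ← hg1']))
                (seqEquiv_refl _),
                (seqEquiv_consE (.nest (show SeqEquiv (gy.fill U) (c1i.fill (p'i.fill Y))
                  from by simpa [PCtx.fill] using hg2)) (seqEquiv_refl _)).trans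
                  (seqEquiv_pushE (by simp [PCtx.fill, PCtx.comp_fill]))⟩
          · -- C5 : both inert in pΔ₂
            obtain ⟨K₃, hpΔ₂, hΔ₃⟩ := stripf2 hF hK2
            refine ⟨.phole [], .pnest (Δc ++ pΔ₁) p₀
              (K ++ SeqElem.nest (g'.fill U) :: (Δ₂ ++ K₃)), le_rfl,
              fun Δp hp => PCtx.noConfusion hp, ?_, fun Y W => ?_⟩
            · refine (seqEquiv_consE (.nest hchainU) (hrest.trans
                (seqEquiv_of_eq (by simp [hΔ₃])))).trans (seqEquiv_pushE (B₁ := Δ₁)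
                (B₂ := Δ₂ ++ (K₃ ++ F)) (by simp [PCtx.fill, hK1]))
            · refine ⟨_, reb_build g' U
                (((Δc ++ pΔ₁) ++ SeqElem.nest (p₀.fill Y) :: K) ++ (Δ₂ ++ (K₃ ++ W)))
                (seqEquiv_pull2E (by simp [PCtx.fill, hpΔ₂]))
                (seqEquiv_pushE (by simp [PCtx.fill])), seqEquiv_refl _⟩
        | phole pΔ =>
          have hfill' : (Δc ++ pΔ) ++ F
              = Δ₁ ++ SeqElem.nest (g'.fill []) :: Δ₂ ++ SeqElem.nest U :: Δ₃ := by
            simpa [PCtx.fill, List.append_assoc] using hfill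
          obtain ⟨K₃, hM, hΔ₃⟩ := stripf2 hF hfill'
          have hM' : ∀ X, Δc ++ (pΔ ++ X) = Δ₁ ++ SeqElem.nest (g'.fill [])
              :: (Δ₂ ++ SeqElem.nest U :: (K₃ ++ X)) := fun X => by
            rw [← List.append_assoc, hM]; simp
          refine ⟨.phole [], .phole (Δ₁ ++ SeqElem.nest (g'.fill U) :: (Δ₂ ++ K₃)), le_rfl,
            fun Δp hp => ⟨_, rfl⟩, ?_, fun Y W => ?_⟩
          · refine (seqEquiv_consE (.nest hchainU) (hrest.trans
              (seqEquiv_of_eq (by simp [hΔ₃])))).trans (seqEquiv_pushE (B₁ := Δ₁)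
              (B₂ := Δ₂ ++ (K₃ ++ F)) (by simp [PCtx.fill]))
          · refine ⟨_, reb_build g' U (Δ₁ ++ (Δ₂ ++ (K₃ ++ (Y ++ W))))
              (seqEquiv_pull2E (by simp [PCtx.fill, hM']))
              (seqEquiv_pushE (by simp [PCtx.fill])), seqEquiv_refl _⟩
    · -- role II : f₁ is the consumed image, f₂ the receiver image
      cases he1 with
      | @nest _ U hU =>
      cases he2 with
      | @nest _ T hgT =>
      obtain ⟨g', rfl, hgg'⟩ := fillinv g hgT
      have hchainU : SeqEquiv (g.fill U₀) (g'.fill U) := (hgg' U₀).trans (g'.fillcong hU)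
      cases c0 with
      | pnest c0Δ₁ c' c0Δ₂ =>
        have hfill' : c0Δ₁ ++ SeqElem.nest (c'.fill (p.fill [] ++ F)) :: c0Δ₂
            = Δ₁ ++ SeqElem.nest U :: Δ₂ ++ SeqElem.nest (g'.fill []) :: Δ₃ := by
          simpa [PCtx.fill] using hfill
        rcases loc2s hfill' with ⟨K, hK1, hK2⟩ | ⟨hK1, hs, hK2⟩ | ⟨K, K', hK1, hK2, hK3⟩
          | ⟨hK1, hs, hK2⟩ | ⟨K, hK1, hK2⟩
        · -- C1 : both inert in c0Δ₁
          refine ⟨.pnest (Δ₁ ++ (Δ₂ ++ SeqElem.nest (g'.fill U) :: K)) c' c0Δ₂, p, le_rfl,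
            fun Δp hp => ⟨Δp, hp⟩, ?_, fun Y W => ?_⟩
          · refine (seqEquiv_consE (.nest hchainU) (hrest.trans
              (seqEquiv_of_eq (by simp [hK2])))).trans (seqEquiv_pushE' (B₁ := Δ₁)
              (B₂ := Δ₂) (B₃ := K ++ SeqElem.nest (c'.fill (p.fill [] ++ F)) :: c0Δ₂)
              (by simp [PCtx.fill]))
          · refine ⟨_, reb_build g' U
              (Δ₁ ++ (Δ₂ ++ (K ++ SeqElem.nest (c'.fill (p.fill Y ++ W)) :: c0Δ₂)))
              (seqEquiv_pull2E' (by simp [PCtx.fill, hK1]))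
              (seqEquiv_pushE' (by simp [PCtx.fill])), seqEquiv_refl _⟩
        · -- C2 : receiver is the spine, two-hole
          have hg'c : g'.fill [] = c'.fill (p.fill [] ++ F) := by injection hs
          obtain ⟨c1i, p'i, hdepi, hpresi, hdiri, hfami⟩ := twohole g' c' p F U hF hg'c
          refine ⟨.pnest (Δ₁ ++ Δ₂) c1i c0Δ₂, p'i, hdepi, hpresi, ?_, fun Y W => ?_⟩
          · refine (seqEquiv_consE (.nest (hchainU.trans hdiri)) (hrest.trans
              (seqEquiv_of_eq (by simp [hK2])))).trans (seqEquiv_pushE' (B₁ := Δ₁)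
              (B₂ := Δ₂) (B₃ := c0Δ₂) (by simp [PCtx.fill]))
          · obtain ⟨gyw, hg1, hg2⟩ := hfami Y W
            refine ⟨_, reb_build gyw U (Δ₁ ++ (Δ₂ ++ c0Δ₂))
              (seqEquiv_pull2E' (by simp [PCtx.fill, hK1, hK2, ← hg1]))
              (seqEquiv_refl _),
              (seqEquiv_consE (.nest hg2) (seqEquiv_refl _)).trans
                (seqEquiv_pushE' (by simp [PCtx.fill]))⟩
        · -- C3 : consumed in c0Δ₁, receiver in c0Δ₂
          refine ⟨.pnest (Δ₁ ++ K) c' (K' ++ SeqElem.nest (g'.fill U) :: Δ₃), p, le_rfl,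
            fun Δp hp => ⟨Δp, hp⟩, ?_, fun Y W => ?_⟩
          · refine (seqEquiv_consE (.nest hchainU) (hrest.trans
              (seqEquiv_of_eq (by simp [hK2])))).trans (seqEquiv_pushE' (B₁ := Δ₁)
              (B₂ := K ++ SeqElem.nest (c'.fill (p.fill [] ++ F)) :: K') (B₃ := Δ₃)
              (by simp [PCtx.fill]))
          · refine ⟨_, reb_build g' U
              (Δ₁ ++ ((K ++ SeqElem.nest (c'.fill (p.fill Y ++ W)) :: K') ++ Δ₃))
              (seqEquiv_pull2E' (by simp [PCtx.fill, hK1, hK3]))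
              (seqEquiv_pushE' (by simp [PCtx.fill])), seqEquiv_refl _⟩
        · -- C4 : consumed is the spine, re-route
          have hU2 : U = c'.fill (p.fill [] ++ F) := by injection hs
          refine ⟨.pnest (c0Δ₁ ++ Δ₂) (g'.comp c') Δ₃, p, le_rfl,
            fun Δp hp => ⟨Δp, hp⟩, ?_, fun Y W => ?_⟩
          · refine (seqEquiv_consE (.nest ((hgg' U₀).trans (g'.fillcong
              (hU.trans (seqEquiv_of_eq hU2))))) (hrest.trans
              (seqEquiv_of_eq (by simp [hK1])))).trans
              (seqEquiv_pushE' (B₁ := c0Δ₁) (B₂ := Δ₂) (B₃ := Δ₃) (by simp [PCtx.fill]))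
          · refine ⟨_, reb_build g' (c'.fill (p.fill Y ++ W)) (c0Δ₁ ++ (Δ₂ ++ Δ₃))
              (seqEquiv_pull2E' (by simp [PCtx.fill, hK2]))
              (seqEquiv_pushE' (by simp [PCtx.fill])), seqEquiv_refl _⟩
        · -- C5 : both inert in c0Δ₂
          refine ⟨.pnest c0Δ₁ c' (K ++ (Δ₂ ++ SeqElem.nest (g'.fill U) :: Δ₃)), p, le_rfl,
            fun Δp hp => ⟨Δp, hp⟩, ?_, fun Y W => ?_⟩
          · refine (seqEquiv_consE (.nest hchainU) (hrest.trans
              (seqEquiv_of_eq (by simp)))).trans (seqEquiv_pushE' (B₁ := Δ₁)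
              (B₂ := Δ₂) (B₃ := Δ₃) (by simp [PCtx.fill, hK1]))
          · refine ⟨_, reb_build g' U
              ((c0Δ₁ ++ SeqElem.nest (c'.fill (p.fill Y ++ W)) :: K) ++ (Δ₂ ++ Δ₃))
              (seqEquiv_pull2E' (by simp [PCtx.fill, hK2]))
              (seqEquiv_pushE' (by simp [PCtx.fill])), seqEquiv_refl _⟩
      | phole Δc =>
        cases p with
        | pnest pΔ₁ p₀ pΔ₂ =>
          have hfill' : (Δc ++ pΔ₁) ++ SeqElem.nest (p₀.fill []) :: (pΔ₂ ++ F)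
              = Δ₁ ++ SeqElem.nest U :: Δ₂ ++ SeqElem.nest (g'.fill []) :: Δ₃ := by
            simpa [PCtx.fill, List.append_assoc] using hfill
          rcases loc2s hfill' with ⟨K, hK1, hK2⟩ | ⟨hK1, hs, hK2⟩ | ⟨K, K', hK1, hK2, hK3⟩
            | ⟨hK1, hs, hK2⟩ | ⟨K, hK1, hK2⟩
          · -- C1 : both inert in Δc ++ pΔ₁
            have hK1' : ∀ X, Δc ++ (pΔ₁ ++ X) = Δ₁ ++ SeqElem.nest U
                :: (Δ₂ ++ SeqElem.nest (g'.fill []) :: (K ++ X)) := fun X => by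
              rw [← List.append_assoc, hK1]; simp
            refine ⟨.phole [], .pnest (Δ₁ ++ (Δ₂ ++ SeqElem.nest (g'.fill U) :: K)) p₀ pΔ₂,
              le_rfl, fun Δp hp => PCtx.noConfusion hp, ?_, fun Y W => ?_⟩
            · refine (seqEquiv_consE (.nest hchainU) (hrest.trans
                (seqEquiv_of_eq (by simp [hK2])))).trans (seqEquiv_pushE' (B₁ := Δ₁)
                (B₂ := Δ₂) (B₃ := K ++ SeqElem.nest (p₀.fill []) :: (pΔ₂ ++ F))
                (by simp [PCtx.fill]))
            · refine ⟨_, reb_build g' U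
                (Δ₁ ++ (Δ₂ ++ (K ++ SeqElem.nest (p₀.fill Y) :: (pΔ₂ ++ W))))
                (seqEquiv_pull2E' (by simp [PCtx.fill, hK1']))
                (seqEquiv_pushE' (by simp [PCtx.fill])), seqEquiv_refl _⟩
          · -- C2 : receiver is the spine, two-hole
            have hg'c : g'.fill [] = p₀.fill [] := by injection hs
            obtain ⟨c1i, p'i, hdepi, hpresi, hdiri, hfami⟩ := twohole g' (.phole []) p₀ [] U
              fmlOnly_nil (by simp [PCtx.fill, hg'c])
            have hK1' : ∀ X, Δc ++ (pΔ₁ ++ X) = Δ₁ ++ SeqElem.nest U :: (Δ₂ ++ X) :=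
              fun X => by rw [← List.append_assoc, hK1]; simp
            refine ⟨.phole [], .pnest (Δ₁ ++ Δ₂) (c1i.comp p'i) pΔ₂, ?_,
              fun Δp hp => PCtx.noConfusion hp, ?_, fun Y W => ?_⟩
            · simp only [PCtx.depth, PCtx.comp_depth]; omega
            · refine (seqEquiv_consE (.nest (hchainU.trans
                (show SeqEquiv (g'.fill U) (c1i.fill (p'i.fill [])) from by
                  simpa [PCtx.fill] using hdiri))) (hrest.trans
                (seqEquiv_of_eq (by simp [hK2])))).trans (seqEquiv_pushE' (B₁ := Δ₁)
                (B₂ := Δ₂) (B₃ := pΔ₂ ++ F) (by simp [PCtx.fill, PCtx.comp_fill]))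
            · obtain ⟨gy, hg1, hg2⟩ := hfami Y []
              have hg1' : gy.fill [] = p₀.fill Y := by simpa [PCtx.fill] using hg1
              refine ⟨_, reb_build gy U (Δ₁ ++ (Δ₂ ++ (pΔ₂ ++ W)))
                (seqEquiv_pull2E' (by simp [PCtx.fill, hK1', ← hg1']))
                (seqEquiv_refl _),
                (seqEquiv_consE (.nest (show SeqEquiv (gy.fill U) (c1i.fill (p'i.fill Y))
                  from by simpa [PCtx.fill] using hg2)) (seqEquiv_refl _)).trans
                  (seqEquiv_pushE' (by simp [PCtx.fill, PCtx.comp_fill]))⟩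
          · -- C3 : consumed in Δc ++ pΔ₁, receiver in pΔ₂
            obtain ⟨R', hpΔ₂, hΔ₃⟩ := stripf hF hK3
            have hK1' : ∀ X, Δc ++ (pΔ₁ ++ X) = Δ₁ ++ SeqElem.nest U :: (K ++ X) :=
              fun X => by rw [← List.append_assoc, hK1]; simp
            refine ⟨.phole [], .pnest (Δ₁ ++ K) p₀ (K' ++ SeqElem.nest (g'.fill U) :: R'),
              le_rfl, fun Δp hp => PCtx.noConfusion hp, ?_, fun Y W => ?_⟩
            · refine (seqEquiv_consE (.nest hchainU) (hrest.trans
                (seqEquiv_of_eq (by simp [hK2, hΔ₃])))).trans (seqEquiv_pushE' (B₁ := Δ₁)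
                (B₂ := K ++ SeqElem.nest (p₀.fill []) :: K') (B₃ := R' ++ F)
                (by simp [PCtx.fill]))
            · refine ⟨_, reb_build g' U
                (Δ₁ ++ ((K ++ SeqElem.nest (p₀.fill Y) :: K') ++ (R' ++ W)))
                (seqEquiv_pull2E' (by simp [PCtx.fill, hK1', hpΔ₂]))
                (seqEquiv_pushE' (by simp [PCtx.fill])), seqEquiv_refl _⟩
          · -- C4 : consumed is the spine, re-route
            have hU2 : U = p₀.fill [] := by injection hs
            obtain ⟨R', hpΔ₂, hΔ₃⟩ := stripf hF hK2
            have hK1' : ∀ X, Δc ++ (pΔ₁ ++ X) = Δ₁ ++ X := fun X => by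
              rw [← List.append_assoc, ← hK1]
            refine ⟨.phole [], .pnest (Δ₁ ++ Δ₂) (g'.comp p₀) R', ?_,
              fun Δp hp => PCtx.noConfusion hp, ?_, fun Y W => ?_⟩
            · simp only [PCtx.depth, PCtx.comp_depth]; omega
            · refine (seqEquiv_consE (.nest ((hgg' U₀).trans (g'.fillcong
                (hU.trans (seqEquiv_of_eq hU2))))) (hrest.trans
                (seqEquiv_of_eq (by simp [hΔ₃])))).trans
                (seqEquiv_pushE' (B₁ := Δ₁) (B₂ := Δ₂) (B₃ := R' ++ F)
                  (by simp [PCtx.fill, PCtx.comp_fill]))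
            · refine ⟨_, reb_build g' (p₀.fill Y) (Δ₁ ++ (Δ₂ ++ (R' ++ W)))
                (seqEquiv_pull2E' (by simp [PCtx.fill, hK1', hpΔ₂]))
                (seqEquiv_pushE' (by simp [PCtx.fill, PCtx.comp_fill])), seqEquiv_refl _⟩
          · -- C5 : both inert in pΔ₂
            obtain ⟨K₃, hpΔ₂, hΔ₃⟩ := stripf2 hF hK2
            refine ⟨.phole [], .pnest (Δc ++ pΔ₁) p₀
              (K ++ (Δ₂ ++ SeqElem.nest (g'.fill U) :: K₃)), le_rfl,
              fun Δp hp => PCtx.noConfusion hp, ?_, fun Y W => ?_⟩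
            · refine (seqEquiv_consE (.nest hchainU) (hrest.trans
                (seqEquiv_of_eq (by simp [hΔ₃])))).trans (seqEquiv_pushE' (B₁ := Δ₁)
                (B₂ := Δ₂) (B₃ := K₃ ++ F) (by simp [PCtx.fill, hK1]))
            · refine ⟨_, reb_build g' U
                (((Δc ++ pΔ₁) ++ SeqElem.nest (p₀.fill Y) :: K) ++ (Δ₂ ++ (K₃ ++ W)))
                (seqEquiv_pull2E' (by simp [PCtx.fill, hpΔ₂]))
                (seqEquiv_pushE' (by simp [PCtx.fill])), seqEquiv_refl _⟩
        | phole pΔ =>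
          have hfill' : (Δc ++ pΔ) ++ F
              = Δ₁ ++ SeqElem.nest U :: Δ₂ ++ SeqElem.nest (g'.fill []) :: Δ₃ := by
            simpa [PCtx.fill, List.append_assoc] using hfill
          obtain ⟨K₃, hM, hΔ₃⟩ := stripf2 hF hfill'
          have hM' : ∀ X, Δc ++ (pΔ ++ X) = Δ₁ ++ SeqElem.nest U
              :: (Δ₂ ++ SeqElem.nest (g'.fill []) :: (K₃ ++ X)) := fun X => by
            rw [← List.append_assoc, hM]; simp
          refine ⟨.phole [], .phole (Δ₁ ++ (Δ₂ ++ SeqElem.nest (g'.fill U) :: K₃)), le_rfl,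
            fun Δp hp => ⟨_, rfl⟩, ?_, fun Y W => ?_⟩
          · refine (seqEquiv_consE (.nest hchainU) (hrest.trans
              (seqEquiv_of_eq (by simp [hΔ₃])))).trans (seqEquiv_pushE' (B₁ := Δ₁)
              (B₂ := Δ₂) (B₃ := K₃ ++ F) (by simp [PCtx.fill]))
          · refine ⟨_, reb_build g' U (Δ₁ ++ (Δ₂ ++ (K₃ ++ (Y ++ W))))
              (seqEquiv_pull2E' (by simp [PCtx.fill, hM']))
              (seqEquiv_pushE' (by simp [PCtx.fill])), seqEquiv_refl _⟩

theorem fmlOnly_one (A : Formula) : fmlOnly [SeqElem.fml A] := by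
  intro e he; rw [List.mem_singleton] at he; exact ⟨A, he⟩

theorem fmlOnly_two (A B : Formula) : fmlOnly [SeqElem.fml A, SeqElem.fml B] := by
  intro e he
  simp only [List.mem_cons, List.mem_singleton, List.not_mem_nil, or_false] at he
  rcases he with rfl | rfl
  · exact ⟨A, rfl⟩
  · exact ⟨B, rfl⟩

theorem pctx_conv (c1 p' : PCtx) (Z T : Sequent) :
    SeqEquiv (c1.fill (p'.fill Z ++ T)) (c1.toCtx.fill (p'.toCtx.fill Z ++ T)) :=
  (c1.fillcong (seqEquiv_append (PCtx.toCtx_equiv p' Z) (seqEquiv_refl T))).trans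
    (PCtx.toCtx_equiv c1 _)

/-- Derivability of bounded height is preserved by rebasing steps. -/
theorem reb_main : ∀ {n : ℕ} {Γ : Sequent}, DerivH n Γ → ∀ {Γ' : Sequent}, Reb Γ Γ' →
    DerivH n Γ' := by
  intro n Γ hd
  induction hd with
  | id n c a =>
    intro Γ' hr
    obtain ⟨c1, p', hdep, hpres, hconc, htrans⟩ := super hr c.toP (.phole [])
      [.fml (.pos a), .fml (.neg a)] (fmlOnly_two _ _)
      (seqEquiv_of_eq (by simp [PCtx.fill]))
    obtain ⟨Δp', rfl⟩ := hpres [] rfl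
    refine DerivH.exch ?_ (DerivH.id n (PCtx.toCtx (c1.comp (.phole Δp'))) a)
    refine ((seqEquiv_symm (PCtx.toCtx_equiv (c1.comp (.phole Δp')) _)).trans
      (seqEquiv_of_eq (by simp [PCtx.fill]))).trans (seqEquiv_symm hconc)
  | @and n c A B _ _ ihA ihB =>
    intro Γ' hr
    obtain ⟨c1, p', hdep, hpres, hconc, htrans⟩ := super hr c.toP (.phole [])
      [.fml (.and A B)] (fmlOnly_one _) (seqEquiv_of_eq (by simp [PCtx.fill]))
    obtain ⟨Δp', rfl⟩ := hpres [] rfl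
    obtain ⟨G1, r1, e1⟩ := htrans [] [.fml A]
    obtain ⟨G2, r2, e2⟩ := htrans [] [.fml B]
    simp only [PCtx.fill, Ctx.toP_fill, List.nil_append, List.append_nil] at r1 r2
    have d1 : DerivH n ((PCtx.toCtx (c1.comp (.phole Δp'))).fill [.fml A]) := by
      refine DerivH.exch ?_ (ihA r1)
      exact (e1.trans (seqEquiv_of_eq (by simp [PCtx.fill]))).trans
        (PCtx.toCtx_equiv (c1.comp (.phole Δp')) _)
    have d2 : DerivH n ((PCtx.toCtx (c1.comp (.phole Δp'))).fill [.fml B]) := by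
      refine DerivH.exch ?_ (ihB r2)
      exact (e2.trans (seqEquiv_of_eq (by simp [PCtx.fill]))).trans
        (PCtx.toCtx_equiv (c1.comp (.phole Δp')) _)
    refine DerivH.exch ?_ (DerivH.and d1 d2)
    refine ((seqEquiv_symm (PCtx.toCtx_equiv (c1.comp (.phole Δp')) _)).trans
      (seqEquiv_of_eq (by simp [PCtx.fill]))).trans (seqEquiv_symm hconc)
  | @or n c A B _ ih =>
    intro Γ' hr
    obtain ⟨c1, p', hdep, hpres, hconc, htrans⟩ := super hr c.toP (.phole [])
      [.fml (.or A B)] (fmlOnly_one _) (seqEquiv_of_eq (by simp [PCtx.fill]))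
    obtain ⟨Δp', rfl⟩ := hpres [] rfl
    obtain ⟨G1, r1, e1⟩ := htrans [] [.fml A, .fml B]
    simp only [PCtx.fill, Ctx.toP_fill, List.nil_append, List.append_nil] at r1
    have d1 : DerivH n ((PCtx.toCtx (c1.comp (.phole Δp'))).fill [.fml A, .fml B]) := by
      refine DerivH.exch ?_ (ih r1)
      exact (e1.trans (seqEquiv_of_eq (by simp [PCtx.fill]))).trans
        (PCtx.toCtx_equiv (c1.comp (.phole Δp')) _)
    refine DerivH.exch ?_ (DerivH.or d1)
    refine ((seqEquiv_symm (PCtx.toCtx_equiv (c1.comp (.phole Δp')) _)).trans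
      (seqEquiv_of_eq (by simp [PCtx.fill]))).trans (seqEquiv_symm hconc)
  | @box n c A _ ih =>
    intro Γ' hr
    obtain ⟨c1, p', hdep, hpres, hconc, htrans⟩ := super hr c.toP (.phole [])
      [.fml (.box A)] (fmlOnly_one _) (seqEquiv_of_eq (by simp [PCtx.fill]))
    obtain ⟨Δp', rfl⟩ := hpres [] rfl
    obtain ⟨G1, r1, e1⟩ := htrans [] [.nest [.fml (.dia A.negate), .fml A]]
    simp only [PCtx.fill, Ctx.toP_fill, List.nil_append, List.append_nil] at r1
    have d1 : DerivH n ((PCtx.toCtx (c1.comp (.phole Δp'))).fill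
        [.nest [.fml (.dia A.negate), .fml A]]) := by
      refine DerivH.exch ?_ (ih r1)
      exact (e1.trans (seqEquiv_of_eq (by simp [PCtx.fill]))).trans
        (PCtx.toCtx_equiv (c1.comp (.phole Δp')) _)
    refine DerivH.exch ?_ (DerivH.box d1)
    refine ((seqEquiv_symm (PCtx.toCtx_equiv (c1.comp (.phole Δp')) _)).trans
      (seqEquiv_of_eq (by simp [PCtx.fill]))).trans (seqEquiv_symm hconc)
  | @dia n c d A hdepth _ ih =>
    intro Γ' hr
    obtain ⟨c1, p', hdep, hpres, hconc, htrans⟩ := super hr c.toP d.toP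
      [.fml (.dia A)] (fmlOnly_one _) (seqEquiv_of_eq (by simp [PCtx.fill]))
    obtain ⟨G1, r1, e1⟩ := htrans [.fml A] [.fml (.dia A)]
    simp only [Ctx.toP_fill] at r1
    have hdd : 0 < (PCtx.toCtx p').depth := by
      have : d.depth ≤ p'.depth := by simpa using hdep
      simp only [PCtx.toCtx_depth]; omega
    have d1 : DerivH n ((PCtx.toCtx c1).fill ((PCtx.toCtx p').fill [.fml A]
        ++ [.fml (.dia A)])) :=
      DerivH.exch (e1.trans (pctx_conv c1 p' _ _)) (ih r1)
    refine DerivH.exch ?_ (DerivH.dia (PCtx.toCtx c1) (PCtx.toCtx p') hdd d1)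
    exact (seqEquiv_symm (pctx_conv c1 p' [] [.fml (.dia A)])).trans (seqEquiv_symm hconc)
  | exch h _ ih =>
    intro Γ' hr
    exact ih (.equiv h hr (seqEquiv_refl _))
  | up _ ih =>
    intro Γ' hr
    exact .up (ih hr)

/-- the rebasing rule is height-preserving admissible. -/
theorem rebase_admissible (h : ℕ) (c d : Ctx) (Δ' : Sequent)
    (hdepth : 0 < d.depth)
    (hd : DerivH h (c.fill (d.fill [] ++ [.nest Δ']))) :
    DerivH h (c.fill (d.fill Δ')) :=
  reb_main hd (reb_inst c hdepth Δ')
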